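/- Let c ∈ ℝ, let π be a pdf on ℝ that is ASU(c), and let d be a distortion function. Then for every ê ∈ ℝ, ∫_ℝ d(e − c) π(e) de ≤ ∫_ℝ d(e − ê) π(e) de (integrals taken in [0, ∞] against Lebesgue measure); that is, the point c attains the infimum inf_{ê ∈ ℝ} ∫_ℝ d(e − ê) π(e) de. -/

import Mathlib

open MeasureTheory Set
open scoped ENNReal NNReal

noncomputable section

/-- A probability density function on ℝ: measurable, nonnegative (via `ℝ≥0`),
integrating to one against Lebesgue measure. -/
def IsPdf (f : ℝ → ℝ≥0) : Prop :=
  Measurable f ∧ ∫⁻ x, (f x : ℝ≥0∞) = 1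

/-- `f` is symmetric and unimodal about `c`. -/
def ASU (c : ℝ) (f : ℝ → ℝ≥0) : Prop :=
  (∀ x, f (c - x) = f (c + x)) ∧ MonotoneOn f (Iic c) ∧ AntitoneOn f (Ici c)

/-- A distortion function: measurable, even, nondecreasing on `[0, ∞)`. -/
def IsDistortion (d : ℝ → ℝ≥0∞) : Prop :=
  Measurable d ∧ (∀ x, d (-x) = d x) ∧ MonotoneOn d (Ici (0 : ℝ))

/-- Property 1: for an ASU(c) pdf `π` and distortion `d`, the center `c` minimizes
the expected distortion, hence attains the infimum. -/
def SolidSet (S : Set ℝ) : Prop := ∀ ⦃x⦄, x ∈ S → ∀ ⦃y : ℝ⦄, |y| ≤ |x| → y ∈ S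

lemma SolidSet.subset_or_subset {S K : Set ℝ} (hS : SolidSet S) (hK : SolidSet K) :
    S ⊆ K ∨ K ⊆ S := by
  by_contra h
  obtain ⟨h1, h2⟩ := not_or.mp h
  obtain ⟨x, hxS, hxK⟩ := not_subset.mp h1
  obtain ⟨y, hyK, hyS⟩ := not_subset.mp h2
  rcases le_total |x| |y| with hxy | hxy
  · exact hxK (hK hyK hxy)
  · exact hyS (hS hxS hxy)

lemma solid_inter_le {S K : Set ℝ} (hS : SolidSet S) (hK : SolidSet K) (u : ℝ) :
    volume (S ∩ (fun x => x + u) ⁻¹' K) ≤ volume (S ∩ K) := by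
  have hpre : volume ((fun x : ℝ => x + u) ⁻¹' K) = volume K := by
    have : (fun x : ℝ => x + u) ⁻¹' K = (fun x : ℝ => u + x) ⁻¹' K := by
      ext x; simp [add_comm]
    rw [this, measure_preimage_add]
  rcases hS.subset_or_subset hK with h | h
  · rw [inter_eq_left.mpr h]
    exact (measure_mono inter_subset_left)
  · rw [inter_eq_right.mpr h]
    exact le_trans (measure_mono inter_subset_right) hpre.le

lemma layer_aux (v : ℝ≥0∞) :
    ∫⁻ t in Ioi (0:ℝ), ({t : ℝ | ENNReal.ofReal t < v}).indicator (fun _ => (1:ℝ≥0∞)) t = v := by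
  have hmeas : MeasurableSet {t : ℝ | ENNReal.ofReal t < v} :=
    measurableSet_lt ENNReal.measurable_ofReal measurable_const
  rw [lintegral_indicator hmeas _]
  rw [setLIntegral_one, Measure.restrict_apply hmeas]
  rcases eq_or_ne v ⊤ with hv | hv
  · subst hv
    have h1 : {t : ℝ | ENNReal.ofReal t < ⊤} ∩ Ioi 0 = Ioi 0 := by
      simp [ENNReal.ofReal_lt_top]
    rw [h1, Real.volume_Ioi]
  · have : {t : ℝ | ENNReal.ofReal t < v} ∩ Ioi 0 = Ioo 0 v.toReal := by
      ext t
      simp only [mem_inter_iff, mem_setOf_eq, mem_Ioi, mem_Ioo]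
      constructor
      · rintro ⟨h1, h2⟩
        exact ⟨h2, (ENNReal.ofReal_lt_iff_lt_toReal h2.le hv).mp h1⟩
      · rintro ⟨h1, h2⟩
        exact ⟨(ENNReal.ofReal_lt_iff_lt_toReal h1.le hv).mpr h2, h1⟩
    rw [this, Real.volume_Ioo, sub_zero, ENNReal.ofReal_toReal hv]

theorem stmt0 (c : ℝ) (π : ℝ → ℝ≥0) (d : ℝ → ℝ≥0∞)
    (hπ : IsPdf π) (hA : ASU c π) (hd : IsDistortion d) :
    (∀ ehat : ℝ, ∫⁻ e, d (e - c) * (π e : ℝ≥0∞) ≤ ∫⁻ e, d (e - ehat) * (π e : ℝ≥0∞)) ∧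
    (∫⁻ e, d (e - c) * (π e : ℝ≥0∞)) = ⨅ ehat : ℝ, ∫⁻ e, d (e - ehat) * (π e : ℝ≥0∞) := by
  obtain ⟨hπm, hπ1⟩ := hπ
  obtain ⟨hsym, hmono, hanti⟩ := hA
  obtain ⟨hdm, hdeven, hdmono⟩ := hd
  -- comparison for π around c
  have hπcomp : ∀ u v : ℝ, |v| ≤ |u| → π (c + u) ≤ π (c + v) := by
    have habs : ∀ u : ℝ, π (c + u) = π (c + |u|) := by
      intro u
      rcases le_or_gt 0 u with h | h
      · rw [abs_of_nonneg h]
      · rw [abs_of_neg h, ← hsym u, sub_eq_add_neg]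
    intro u v huv
    rw [habs u, habs v]
    exact hanti (by simp [mem_Ici, abs_nonneg] : c + |v| ∈ Ici c)
      (by simp [mem_Ici, abs_nonneg] : c + |u| ∈ Ici c) (by linarith)
  -- comparison for d around 0
  have hdcomp : ∀ x y : ℝ, |y| ≤ |x| → d y ≤ d x := by
    have habs : ∀ x : ℝ, d x = d |x| := by
      intro x
      rcases le_or_gt 0 x with h | h
      · rw [abs_of_nonneg h]
      · rw [abs_of_neg h, hdeven x]
    intro x y hxy
    rw [habs x, habs y]
    exact hdmono (abs_nonneg y) (abs_nonneg x) hxy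
  -- solidity of sublevel sets of d
  have hSsolid : ∀ t : ℝ≥0∞, SolidSet {x : ℝ | d x ≤ t} := by
    intro t x hx y hyx
    exact le_trans (hdcomp x y hyx) hx
  -- solidity of (recentered) superlevel sets of π
  have hKsolid : ∀ s : ℝ, SolidSet {x : ℝ | s < ((π (c + x) : ℝ))} := by
    intro s x hx y hyx
    have h2 : π (c + x) ≤ π (c + y) := hπcomp x y hyx
    simp only [mem_setOf_eq] at hx ⊢
    exact hx.trans_le (by exact_mod_cast h2)
  -- shifting lemmas
  have hshift : ∀ b : ℝ, ∫⁻ e, d (e - b) * (π e : ℝ≥0∞) = ∫⁻ x, d x * (π (x + b) : ℝ≥0∞) := by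
    intro b
    rw [← lintegral_add_right_eq_self (fun e => d (e - b) * (π e : ℝ≥0∞)) b]
    simp only [add_sub_cancel_right]
  have hmass : ∀ b : ℝ, ∫⁻ x, (π (x + b) : ℝ≥0∞) = 1 := by
    intro b
    rw [lintegral_add_right_eq_self (fun x => (π x : ℝ≥0∞)) b, hπ1]
  -- layer cake in d
  have hlayer : ∀ b : ℝ, ∫⁻ x, d x * (π (x + b) : ℝ≥0∞)
      = ∫⁻ t in Ioi (0:ℝ), ∫⁻ x in {x : ℝ | ENNReal.ofReal t < d x}, (π (x + b) : ℝ≥0∞) := by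
    intro b
    have hW : MeasurableSet {p : ℝ × ℝ | ENNReal.ofReal p.2 < d p.1} :=
      measurableSet_lt (ENNReal.measurable_ofReal.comp measurable_snd) (hdm.comp measurable_fst)
    have hU : ∀ t : ℝ, MeasurableSet {x : ℝ | ENNReal.ofReal t < d x} := fun t =>
      measurableSet_lt measurable_const hdm
    calc ∫⁻ x, d x * (π (x + b) : ℝ≥0∞)
        = ∫⁻ x, ∫⁻ t in Ioi (0:ℝ),
            ({t : ℝ | ENNReal.ofReal t < d x}).indicator (fun _ => (1:ℝ≥0∞)) t
              * (π (x + b) : ℝ≥0∞) := by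
          congr 1
          funext x
          conv_lhs => rw [← layer_aux (d x)]
          exact (lintegral_mul_const _ (measurable_one.indicator
            (measurableSet_lt ENNReal.measurable_ofReal measurable_const))).symm
      _ = ∫⁻ t in Ioi (0:ℝ), ∫⁻ x,
            ({t : ℝ | ENNReal.ofReal t < d x}).indicator (fun _ => (1:ℝ≥0∞)) t
              * (π (x + b) : ℝ≥0∞) := by
          apply lintegral_lintegral_swap
          apply Measurable.aemeasurable
          have : (Function.uncurry fun (x t : ℝ) =>
              ({t : ℝ | ENNReal.ofReal t < d x}).indicator (fun _ => (1:ℝ≥0∞)) t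
                * (π (x + b) : ℝ≥0∞))
              = fun p : ℝ × ℝ => ({p : ℝ × ℝ | ENNReal.ofReal p.2 < d p.1}).indicator
                  (fun _ => (1:ℝ≥0∞)) p * (π (p.1 + b) : ℝ≥0∞) := by
            funext p
            rfl
          rw [this]
          exact ((measurable_one.indicator hW).mul
            ((measurable_coe_nnreal_ennreal.comp (hπm.comp (measurable_fst.add_const b)))))
      _ = ∫⁻ t in Ioi (0:ℝ), ∫⁻ x in {x : ℝ | ENNReal.ofReal t < d x}, (π (x + b) : ℝ≥0∞) := by
          apply lintegral_congr
          intro t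
          rw [← lintegral_indicator (hU t) _]
          congr 1
          funext x
          by_cases h : ENNReal.ofReal t < d x <;> simp [indicator, h]
  -- per-level comparison
  have hlevel : ∀ (U : Set ℝ), MeasurableSet U → SolidSet Uᶜ → ∀ a : ℝ,
      ∫⁻ x in U, (π (x + c) : ℝ≥0∞) ≤ ∫⁻ x in U, (π (x + a) : ℝ≥0∞) := by
    intro U hU hUc a
    set S := Uᶜ with hSdef
    have hS : MeasurableSet S := hU.compl
    -- layer cake for π on S
    have key : ∀ b : ℝ, ∫⁻ x in S, (π (x + b) : ℝ≥0∞)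
        = ∫⁻ s in Ioi (0:ℝ), volume ({x : ℝ | s < ((π (x + b) : ℝ))} ∩ S) := by
      intro b
      have hf : AEMeasurable (fun x : ℝ => ((π (x + b) : ℝ))) (volume.restrict S) :=
        ((hπm.comp (measurable_add_const b)).coe_nnreal_real).aemeasurable
      have := lintegral_eq_lintegral_meas_lt (volume.restrict S)
        (Filter.Eventually.of_forall fun x => (π (x + b)).coe_nonneg) hf
      simp only [ENNReal.ofReal_coe_nnreal] at this
      rw [this]
      apply lintegral_congr
      intro s
      rw [Measure.restrict_apply' hS]
    have hcomp : ∫⁻ x in S, (π (x + a) : ℝ≥0∞) ≤ ∫⁻ x in S, (π (x + c) : ℝ≥0∞) := by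
      rw [key a, key c]
      apply lintegral_mono
      intro s
      have hKc : {x : ℝ | s < ((π (x + c) : ℝ))} = {x : ℝ | s < ((π (c + x) : ℝ))} := by
        ext x; simp [add_comm]
      have hKa : {x : ℝ | s < ((π (x + a) : ℝ))}
          = (fun x : ℝ => x + (a - c)) ⁻¹' {x : ℝ | s < ((π (c + x) : ℝ))} := by
        ext x
        simp only [mem_setOf_eq, mem_preimage]
        have : c + (x + (a - c)) = x + a := by ring
        rw [this]
      show volume ({x : ℝ | s < ((π (x + a) : ℝ))} ∩ S)
          ≤ volume ({x : ℝ | s < ((π (x + c) : ℝ))} ∩ S)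
      rw [hKc, hKa]
      calc volume ((fun x : ℝ => x + (a - c)) ⁻¹' {x : ℝ | s < ((π (c + x) : ℝ))} ∩ S)
          = volume (S ∩ (fun x : ℝ => x + (a - c)) ⁻¹' {x : ℝ | s < ((π (c + x) : ℝ))}) := by
            rw [inter_comm]
        _ ≤ volume (S ∩ {x : ℝ | s < ((π (c + x) : ℝ))}) := solid_inter_le hUc (hKsolid s) _
        _ = volume ({x : ℝ | s < ((π (c + x) : ℝ))} ∩ S) := by rw [inter_comm]
    -- pass to complements
    have hsplit : ∀ b : ℝ, (∫⁻ x in U, (π (x + b) : ℝ≥0∞)) + ∫⁻ x in S, (π (x + b) : ℝ≥0∞) = 1 := by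
      intro b
      rw [lintegral_add_compl _ hU]
      exact hmass b
    have hSa_ne : (∫⁻ x in S, (π (x + a) : ℝ≥0∞)) ≠ ⊤ := by
      intro h
      have := hsplit a
      rw [h] at this
      simp at this
    have h1 : (∫⁻ x in U, (π (x + c) : ℝ≥0∞)) + ∫⁻ x in S, (π (x + a) : ℝ≥0∞)
        ≤ (∫⁻ x in U, (π (x + a) : ℝ≥0∞)) + ∫⁻ x in S, (π (x + a) : ℝ≥0∞) := by
      calc (∫⁻ x in U, (π (x + c) : ℝ≥0∞)) + ∫⁻ x in S, (π (x + a) : ℝ≥0∞)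
          ≤ (∫⁻ x in U, (π (x + c) : ℝ≥0∞)) + ∫⁻ x in S, (π (x + c) : ℝ≥0∞) :=
            add_le_add_right hcomp _
        _ = 1 := hsplit c
        _ = (∫⁻ x in U, (π (x + a) : ℝ≥0∞)) + ∫⁻ x in S, (π (x + a) : ℝ≥0∞) := (hsplit a).symm
    exact (ENNReal.add_le_add_iff_right hSa_ne).mp h1
  -- main inequality
  have hmain : ∀ ehat : ℝ, ∫⁻ e, d (e - c) * (π e : ℝ≥0∞) ≤ ∫⁻ e, d (e - ehat) * (π e : ℝ≥0∞) := by
    intro a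
    rw [hshift c, hshift a, hlayer c, hlayer a]
    apply lintegral_mono
    intro t
    apply hlevel _ (measurableSet_lt measurable_const hdm)
    · intro x hx y hyx
      simp only [mem_compl_iff, mem_setOf_eq, not_lt] at hx ⊢
      exact le_trans (hdcomp x y hyx) hx
  refine ⟨hmain, le_antisymm (le_iInf hmain) (iInf_le _ c)⟩
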